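/- Every global minimizer (b*, W*) of problem (P) satisfies, for every coordinate j ∈ {1,...,K}, W*_j = sign(U_j) · min{ M‖b*‖₂ , S_λ̄(|U_j|) }. -/

import Mathlib

/-- Soft-thresholding operator `S_t(x) = sign(x) · max(|x| − t, 0)`. -/
noncomputable def st (t x : ℝ) : ℝ := Real.sign x * max (|x| - t) 0

/-- Euclidean (ℓ₂) norm on `ℝ^n`. -/
noncomputable def l2 {n : ℕ} (x : Fin n → ℝ) : ℝ := Real.sqrt (∑ i, (x i) ^ 2)

/-- ℓ₁ norm on `ℝ^n`. -/
noncomputable def l1 {n : ℕ} (x : Fin n → ℝ) : ℝ := ∑ i, |x i|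

/-- Objective of problem (P):
`½‖v − b‖₂² + ½‖U − W‖₂² + λ‖b‖₂ + λ̄‖W‖₁`. -/
noncomputable def objP {k K : ℕ} (lam lamb : ℝ) (v : Fin k → ℝ) (U : Fin K → ℝ)
    (b : Fin k → ℝ) (W : Fin K → ℝ) : ℝ :=
  (1 / 2) * ∑ i, (v i - b i) ^ 2 + (1 / 2) * ∑ j, (U j - W j) ^ 2 + lam * l2 b + lamb * l1 W

lemma st_abs (lamb u : ℝ) (hl : 0 ≤ lamb) : st lamb |u| = max (|u| - lamb) 0 := by
  unfold st
  rcases eq_or_ne u 0 with h | h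
  · subst h
    simp [Real.sign_zero, max_eq_right (by linarith : (0:ℝ) - lamb ≤ 0)]
    linarith
  · rw [abs_abs, Real.sign_of_pos (abs_pos.mpr h), one_mul]

lemma aux_key (u lamb C x : ℝ) (hu : 0 ≤ u) (hl : 0 ≤ lamb) (hC : 0 ≤ C)
    (hxl : -C ≤ x) (hxu : x ≤ C) :
    0 ≤ (min C (max (u - lamb) 0) - u) * (x - min C (max (u - lamb) 0)) +
      lamb * (|x| - min C (max (u - lamb) 0)) := by
  set m := max (u - lamb) 0 with hm
  rcases le_or_gt m C with h | h
  · rw [min_eq_right h]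
    rcases le_or_gt u lamb with h2 | h2
    · have hm0 : m = 0 := max_eq_right (by linarith)
      rw [hm0]
      have h1 : u * x ≤ u * |x| := mul_le_mul_of_nonneg_left (le_abs_self x) hu
      nlinarith [abs_nonneg x]
    · have hm1 : m = u - lamb := max_eq_left (by linarith)
      rw [hm1]
      nlinarith [le_abs_self x]
  · rw [min_eq_left h.le]
    have hmpos : 0 < m := lt_of_le_of_lt hC h
    have hul : lamb < u := by
      by_contra hcon
      push_neg at hcon
      have : m = 0 := max_eq_right (by linarith)
      linarith
    have hm1 : m = u - lamb := max_eq_left (by linarith)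
    have hcu : lamb + C < u := by rw [hm1] at h; linarith
    have h1 : 0 ≤ (u - C - lamb) * (C - x) :=
      mul_nonneg (by linarith) (by linarith)
    have h2 : 0 ≤ lamb * (|x| - x) := mul_nonneg hl (by linarith [le_abs_self x])
    nlinarith

lemma key_ineq (u lamb C x : ℝ) (hl : 0 ≤ lamb) (hC : 0 ≤ C) (hx : |x| ≤ C) :
    0 ≤ (Real.sign u * min C (max (|u| - lamb) 0) - u) *
        (x - Real.sign u * min C (max (|u| - lamb) 0)) +
      lamb * (|x| - |Real.sign u * min C (max (|u| - lamb) 0)|) := by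
  obtain ⟨hxl, hxu⟩ := abs_le.mp hx
  have hmin0 : 0 ≤ min C (max (|u| - lamb) 0) := le_min hC (le_max_right _ _)
  rcases lt_trichotomy u 0 with h | h | h
  · rw [Real.sign_of_neg h, abs_of_neg h]
    have haux := aux_key (-u) lamb C (-x) (by linarith) hl hC (by linarith) (by linarith)
    rw [abs_neg] at haux
    have habs : |(-1 : ℝ) * min C (max (-u - lamb) 0)| = min C (max (-u - lamb) 0) := by
      rw [abs_mul, abs_neg, abs_one, one_mul]
      exact abs_of_nonneg (le_min hC (le_max_right _ _))
    rw [habs]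
    nlinarith [haux]
  · subst h
    simp only [Real.sign_zero, zero_mul, abs_zero]
    have : (0:ℝ) - 0 = 0 := by ring
    nlinarith [abs_nonneg x, mul_nonneg hl (abs_nonneg x)]
  · rw [Real.sign_of_pos h, abs_of_pos h, one_mul,
      abs_of_nonneg (le_min hC (le_max_right _ _))]
    exact aux_key u lamb C x h.le hl hC hxl hxu

/-- Every global minimizer `(b*, W*)` of problem (P) satisfies, for every coordinate `j`,
`W*_j = sign(U_j) · min{ M‖b*‖₂ , S_λ̄(|U_j|) }`. -/
theorem stmt0 (k K : ℕ) (hk : 1 ≤ k) (hK : 1 ≤ K)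
    (lam lamb M : ℝ) (hlam : 0 ≤ lam) (hlamb : 0 ≤ lamb) (hM : 0 < M)
    (v : Fin k → ℝ) (U : Fin K → ℝ)
    (bstar : Fin k → ℝ) (Wstar : Fin K → ℝ)
    (hfeas : ∀ j, |Wstar j| ≤ M * l2 bstar)
    (hmin : ∀ (b : Fin k → ℝ) (W : Fin K → ℝ), (∀ j, |W j| ≤ M * l2 b) →
      objP lam lamb v U bstar Wstar ≤ objP lam lamb v U b W) :
    ∀ j, Wstar j = Real.sign (U j) * min (M * l2 bstar) (st lamb |U j|) := by
  intro j
  set C := M * l2 bstar with hCdef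
  have hC : 0 ≤ C := le_trans (abs_nonneg _) (hfeas j)
  set u := U j with hudef
  rw [st_abs lamb u hlamb]
  set s := Real.sign u * min C (max (|u| - lamb) 0) with hsdef
  have hsabs : |s| ≤ C := by
    rw [hsdef, abs_mul, abs_of_nonneg (le_min hC (le_max_right _ _))]
    rcases lt_trichotomy u 0 with h | h | h
    · rw [Real.sign_of_neg h]
      simpa using min_le_left C _
    · rw [h]; simp [Real.sign_zero, hC]
    · rw [Real.sign_of_pos h]
      simpa using min_le_left C _
  -- coordinate-wise minimality
  have hcoord : ∀ w : ℝ, |w| ≤ C →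
      (1/2) * (u - Wstar j)^2 + lamb * |Wstar j| ≤ (1/2) * (u - w)^2 + lamb * |w| := by
    intro w hw
    have hfeas' : ∀ j', |Function.update Wstar j w j'| ≤ C := by
      intro j'
      by_cases h : j' = j
      · subst h; simpa using hw
      · rw [Function.update_of_ne h]; exact hfeas j'
    have hin := hmin bstar (Function.update Wstar j w) hfeas'
    unfold objP at hin
    have hsplit1 : ∑ j', (U j' - Wstar j')^2
        = (u - Wstar j)^2 + ∑ j' ∈ Finset.univ.erase j, (U j' - Wstar j')^2 :=
      (Finset.add_sum_erase _ _ (Finset.mem_univ j)).symm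
    have hsplit2 : ∑ j', (U j' - Function.update Wstar j w j')^2
        = (u - w)^2 + ∑ j' ∈ Finset.univ.erase j, (U j' - Wstar j')^2 := by
      rw [← Finset.add_sum_erase _ _ (Finset.mem_univ j)]
      congr 1
      · simp [hudef]
      · exact Finset.sum_congr rfl fun i hi => by
          rw [Function.update_of_ne (Finset.ne_of_mem_erase hi)]
    have hsplit3 : l1 Wstar = |Wstar j| + ∑ j' ∈ Finset.univ.erase j, |Wstar j'| :=
      (Finset.add_sum_erase _ _ (Finset.mem_univ j)).symm
    have hsplit4 : l1 (Function.update Wstar j w)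
        = |w| + ∑ j' ∈ Finset.univ.erase j, |Wstar j'| := by
      unfold l1
      rw [← Finset.add_sum_erase _ _ (Finset.mem_univ j)]
      congr 1
      · simp
      · exact Finset.sum_congr rfl fun i hi => by
          rw [Function.update_of_ne (Finset.ne_of_mem_erase hi)]
    rw [hsplit1, hsplit2, hsplit3, hsplit4] at hin
    nlinarith [hin]
  have h1 := hcoord s hsabs
  have h2 := key_ineq u lamb C (Wstar j) hlamb hC (hfeas j)
  rw [← hsdef] at h2
  have hsq : (Wstar j - s)^2 ≤ 0 := by nlinarith
  have : Wstar j - s = 0 := by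
    have := le_antisymm hsq (sq_nonneg _)
    exact (pow_eq_zero_iff two_ne_zero).mp this
  linarith
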